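/- Let (K,|·|) be an ultrametric field, E a topological K-vector space, n₁, …, n_ℓ ∈ ℕ with n = n₁ + ⋯ + n_ℓ, α ∈ (ℕ₀ ∪ {∞})^ℓ, and U ⊆ K^n a compact locally cartesian subset. Then every function f : U → E which is locally polynomial of multidegree ≤ α extends to a function g : K^n → E which is locally polynomial of multidegree ≤ α, i.e., g|_U = f. -/

import Mathlib

/-- A subset of `K^{n₁} × ⋯ × K^{n_ℓ}` is *cartesian* if it is a product of subsets of `K`
(one for each coordinate) none of which has an isolated point. -/
def IsCartesianSetD {K : Type*} [TopologicalSpace K] {ℓ : ℕ} {nn : Fin ℓ → ℕ}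
    (V : Set ((j : Fin ℓ) → Fin (nn j) → K)) : Prop :=
  ∃ W : (j : Fin ℓ) → Fin (nn j) → Set K,
    V = {x | ∀ j i, x j i ∈ W j i} ∧ ∀ j i, Preperfect (W j i)

/-- A subset of `K^{n₁} × ⋯ × K^{n_ℓ}` is *locally cartesian* if each of its points has a
relatively open neighbourhood in it which is cartesian. -/
def IsLocallyCartesianD {K : Type*} [TopologicalSpace K] {ℓ : ℕ} {nn : Fin ℓ → ℕ}
    (U : Set ((j : Fin ℓ) → Fin (nn j) → K)) : Prop :=
  ∀ x ∈ U, ∃ V : Set ((j : Fin ℓ) → Fin (nn j) → K),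
    x ∈ V ∧ V ⊆ U ∧ (∃ O, IsOpen O ∧ V = U ∩ O) ∧ IsCartesianSetD V

/-- `g` is a polynomial function of multidegree `≤ α` on `S ⊆ K^{n₁} × ⋯ × K^{n_ℓ}`:
on `S` it agrees with `x ↦ ∑_β x^β • a_β`, summed over finitely many multi-indices
`β = (β₁,…,β_ℓ)` with `|β_j| ≤ α_j` for all `j`. -/
def IsPolynomialOfMultidegreeLe {K : Type*} [Field K] {E : Type*} [AddCommGroup E]
    [Module K E] {ℓ : ℕ} {nn : Fin ℓ → ℕ} (α : Fin ℓ → ℕ∞)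
    (S : Set ((j : Fin ℓ) → Fin (nn j) → K))
    (g : ((j : Fin ℓ) → Fin (nn j) → K) → E) : Prop :=
  ∃ (Φ : Finset ((j : Fin ℓ) → Fin (nn j) → ℕ))
    (c : ((j : Fin ℓ) → Fin (nn j) → ℕ) → E),
    (∀ β ∈ Φ, ∀ j, ((∑ i, β j i : ℕ) : ℕ∞) ≤ α j) ∧
    ∀ x ∈ S, g x = ∑ β ∈ Φ, (∏ j, ∏ i, x j i ^ β j i) • c β

/-- `f` is locally polynomial of multidegree `≤ α` on `U`: each point of `U` has a
relatively open neighbourhood in `U` on which `f` agrees with a polynomial function of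
multidegree `≤ α`. -/
def IsLocallyPolynomialOfMultidegreeLe {K : Type*} [NormedField K] {E : Type*}
    [AddCommGroup E] [Module K E] {ℓ : ℕ} {nn : Fin ℓ → ℕ} (α : Fin ℓ → ℕ∞)
    (U : Set ((j : Fin ℓ) → Fin (nn j) → K))
    (f : ((j : Fin ℓ) → Fin (nn j) → K) → E) : Prop :=
  ∀ x ∈ U, ∃ V : Set ((j : Fin ℓ) → Fin (nn j) → K),
    x ∈ V ∧ V ⊆ U ∧ (∃ O, IsOpen O ∧ V = U ∩ O) ∧
    IsPolynomialOfMultidegreeLe α V f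

/-- **Extension of locally polynomial functions** (Lemma `extlocp`).
Over an ultrametric field `K`, a function which is locally polynomial of multidegree
`≤ α` on a compact locally cartesian subset `U ⊆ K^{n₁} × ⋯ × K^{n_ℓ}` extends to a
locally polynomial function of multidegree `≤ α` on all of `K^{n₁} × ⋯ × K^{n_ℓ}`. -/
theorem locallyPolynomial_extension
    {K : Type*} [NontriviallyNormedField K] [IsUltrametricDist K]
    {E : Type*} [AddCommGroup E] [Module K E] [TopologicalSpace E]
    [IsTopologicalAddGroup E] [ContinuousSMul K E]
    (ℓ : ℕ) (hℓ : 1 ≤ ℓ) (nn : Fin ℓ → ℕ) (hnn : ∀ j, 1 ≤ nn j) (α : Fin ℓ → ℕ∞)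
    (U : Set ((j : Fin ℓ) → Fin (nn j) → K))
    (hUc : IsCompact U) (hUlc : IsLocallyCartesianD U)
    (f : ((j : Fin ℓ) → Fin (nn j) → K) → E)
    (hf : IsLocallyPolynomialOfMultidegreeLe α U f) :
    ∃ g : ((j : Fin ℓ) → Fin (nn j) → K) → E,
      IsLocallyPolynomialOfMultidegreeLe α Set.univ g ∧ ∀ x ∈ U, g x = f x := by
  classical
  -- each point of U has a clopen neighbourhood on which f agrees with a polynomial
  have key : ∀ u : U, ∃ (B : Set ((j : Fin ℓ) → Fin (nn j) → K))
      (p : ((j : Fin ℓ) → Fin (nn j) → K) → E),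
      (u : (j : Fin ℓ) → Fin (nn j) → K) ∈ B ∧ IsOpen B ∧ IsClosed B ∧
      IsPolynomialOfMultidegreeLe α Set.univ p ∧ ∀ x ∈ U ∩ B, f x = p x := by
    rintro ⟨u, hu⟩
    obtain ⟨V, hxV, hVU, ⟨O, hO, rfl⟩, Φ, c, hΦ, hpoly⟩ := hf u hu
    obtain ⟨r, hr, hball⟩ := Metric.isOpen_iff.1 hO u hxV.2
    set S : Set ((j : Fin ℓ) → Fin (nn j) → K) :=
      {y | ∀ j i, dist (y j i) (u j i) < r} with hS
    have hSeq : S = ⋂ j, ⋂ i, (fun y : (j : Fin ℓ) → Fin (nn j) → K => y j i) ⁻¹'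
        Metric.ball (u j i) r := by
      ext y; simp [hS, Metric.mem_ball]
    have hSo : IsOpen S := by
      rw [hSeq]
      exact isOpen_iInter_of_finite fun j => isOpen_iInter_of_finite fun i =>
        ((IsUltrametricDist.isClopen_ball (u j i) r).2).preimage
          ((continuous_apply i).comp (continuous_apply j))
    have hSc : IsClosed S := by
      rw [hSeq]
      exact isClosed_iInter fun j => isClosed_iInter fun i =>
        ((IsUltrametricDist.isClopen_ball (u j i) r).1).preimage
          ((continuous_apply i).comp (continuous_apply j))
    have hSO : S ⊆ O := by
      intro y hy
      apply hball
      rw [Metric.mem_ball]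
      exact (dist_pi_lt_iff hr).2 fun j => (dist_pi_lt_iff hr).2 fun i => hy j i
    refine ⟨S, fun x => ∑ β ∈ Φ, (∏ j, ∏ i, x j i ^ β j i) • c β,
      fun j i => by simpa using hr, hSo, hSc, ⟨Φ, c, hΦ, fun x _ => rfl⟩, ?_⟩
    rintro x ⟨hxU, hxB⟩
    exact hpoly x ⟨hxU, hSO hxB⟩
  choose B p hmem hBo hBc hp hagree using key
  obtain ⟨t, ht⟩ := hUc.elim_finite_subcover B hBo
    (fun x hx => Set.mem_iUnion.2 ⟨⟨x, hx⟩, hmem ⟨x, hx⟩⟩)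
  suffices H : ∃ g, IsLocallyPolynomialOfMultidegreeLe α Set.univ g ∧
      ∀ x ∈ U ∩ ⋃ i ∈ t, B i, g x = f x by
    obtain ⟨g, hg, hgf⟩ := H
    exact ⟨g, hg, fun x hx => hgf x ⟨hx, ht hx⟩⟩
  clear ht
  induction t using Finset.induction with
  | empty =>
    refine ⟨fun _ => 0, ?_, by simp⟩
    intro x _
    exact ⟨Set.univ, trivial, le_refl _, ⟨Set.univ, isOpen_univ, by simp⟩,
      ∅, fun _ => 0, by simp, by simp⟩
  | @insert i s hi ih =>
    obtain ⟨g, hg, hgf⟩ := ih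
    refine ⟨fun x => if x ∈ B i then p i x else g x, ?_, ?_⟩
    · intro x _
      by_cases hx : x ∈ B i
      · refine ⟨B i, hx, Set.subset_univ _, ⟨B i, hBo i, (Set.univ_inter _).symm⟩, ?_⟩
        obtain ⟨Φ, c, hΦ, hpoly⟩ := hp i
        exact ⟨Φ, c, hΦ, fun y hy => by simp only [if_pos hy]; exact hpoly y trivial⟩
      · obtain ⟨V, hxV, _, ⟨O, hO, hVO⟩, Φ, c, hΦ, hpoly⟩ := hg x trivial
        refine ⟨V ∩ (B i)ᶜ, ⟨hxV, hx⟩, Set.subset_univ _,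
          ⟨O ∩ (B i)ᶜ, hO.inter (hBc i).isOpen_compl, by
            rw [hVO]; rw [Set.univ_inter, Set.univ_inter]⟩, Φ, c, hΦ, ?_⟩
        rintro y ⟨hyV, hyB⟩
        simp only [if_neg hyB]
        exact hpoly y hyV
    · rintro x ⟨hxU, hxB⟩
      by_cases hx : x ∈ B i
      · simp only [if_pos hx]
        exact (hagree i x ⟨hxU, hx⟩).symm
      · simp only [if_neg hx]
        apply hgf
        refine ⟨hxU, ?_⟩
        simp only [Set.mem_iUnion, Finset.mem_insert] at hxB ⊢
        obtain ⟨j, hj, hxj⟩ := hxB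
        rcases hj with rfl | hj
        · exact absurd hxj hx
        · exact ⟨j, hj, hxj⟩
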